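/- Let 1 < p < 2, let d and n be positive integers, and let x¹, …, xⁿ be points in ℝ^d. Then the p-norm distance matrix B ∈ ℝ^{n×n} defined by B_{ij} = ‖xⁱ − xʲ‖_p is almost negative definite. Moreover, if n ≥ 2 and the points x¹, …, xⁿ are distinct, then B is strictly AND and (−1)^{n−1} · det B > 0; in particular B is nonsingular. -/

import Mathlib

open Real MeasureTheory Set Filter
open scoped Matrix

/-- A symmetric real matrix `A` is *almost negative definite* if
`yᵀ A y ≤ 0` for every vector `y` whose coordinates sum to zero. -/
def IsAND {n : ℕ} (A : Matrix (Fin n) (Fin n) ℝ) : Prop :=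
  A.IsSymm ∧ ∀ y : Fin n → ℝ, (∑ i, y i) = 0 →
    ∑ i, ∑ j, y i * A i j * y j ≤ 0

/-- A symmetric real matrix `A` is *strictly almost negative definite* if
moreover `yᵀ A y < 0` for every nonzero such `y`. -/
def IsStrictAND {n : ℕ} (A : Matrix (Fin n) (Fin n) ℝ) : Prop :=
  A.IsSymm ∧ ∀ y : Fin n → ℝ, (∑ i, y i) = 0 → y ≠ 0 →
    ∑ i, ∑ j, y i * A i j * y j < 0

/-- The `p`-norm `‖x‖_p = (∑ |x_k|^p)^(1/p)` on `ℝ^d`. -/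
noncomputable def pNorm {d : ℕ} (p : ℝ) (x : Fin d → ℝ) : ℝ :=
  (∑ k, |x k| ^ p) ^ (1 / p)

lemma gauss_psd {n m : ℕ} (v : Fin n → Fin m → ℝ) {u : ℝ} (hu : 0 ≤ u) (c : Fin n → ℝ) :
    0 ≤ ∑ i, ∑ j, c i * c j * Real.exp (-(u * ∑ k, (v i k - v j k)^2)) := by
  classical
  set a : Fin n → ℝ := fun i => c i * Real.exp (-(u * ∑ k, (v i k)^2)) with ha
  have key : ∀ i j : Fin n, c i * c j * Real.exp (-(u * ∑ k, (v i k - v j k)^2))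
      = a i * a j * Real.exp (2*u*∑ k, v i k * v j k) := by
    intro i j
    have hs : ∑ k, (v i k - v j k)^2
        = ∑ k, (v i k)^2 + ∑ k, (v j k)^2 - 2*∑ k, v i k * v j k := by
      rw [← Finset.sum_add_distrib, Finset.mul_sum, ← Finset.sum_sub_distrib]
      exact Finset.sum_congr rfl fun k _ => by ring
    have harg : -(u * ∑ k, (v i k - v j k)^2)
        = (-(u * ∑ k, (v i k)^2)) + (-(u * ∑ k, (v j k)^2)) + 2*u*∑ k, v i k * v j k := by
      rw [hs]; ring
    rw [harg, Real.exp_add, Real.exp_add, ha]; ring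
  simp only [key]
  -- expand exp as tsum
  have hexp : ∀ S : ℝ, Real.exp (2*u*S) = ∑' K : ℕ, (2*u*S)^K / K.factorial := by
    intro S
    rw [Real.exp_eq_exp_ℝ, NormedSpace.exp_eq_tsum_div]
  have hsummable : ∀ (x : ℝ), Summable (fun K : ℕ => x^K / K.factorial) :=
    fun x => Real.summable_pow_div_factorial x
  have step : ∑ i, ∑ j, a i * a j * Real.exp (2*u*∑ k, v i k * v j k)
      = ∑' K : ℕ, ∑ i, ∑ j, a i * a j * ((2*u*∑ k, v i k * v j k)^K / K.factorial) := by
    rw [Summable.tsum_finsetSum (fun i _ => ?_)]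
    · refine Finset.sum_congr rfl fun i _ => ?_
      rw [Summable.tsum_finsetSum (fun j _ => ((hsummable _).mul_left _))]
      refine Finset.sum_congr rfl fun j _ => ?_
      rw [hexp, ← tsum_mul_left]
    · exact summable_sum fun j _ => (hsummable _).mul_left _
  rw [step]
  refine tsum_nonneg fun K => ?_
  have expand : ∀ i j : Fin n,
      a i * a j * ((2*u*∑ k, v i k * v j k)^K / K.factorial)
      = (2*u)^K / K.factorial *
          ∑ mf : Fin K → Fin m, (a i * ∏ t, v i (mf t)) * (a j * ∏ t, v j (mf t)) := by
    intro i j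
    have : (∑ k, v i k * v j k)^K = ∑ mf : Fin K → Fin m, ∏ t, (v i (mf t) * v j (mf t)) := by
      have h1 : (∑ k, v i k * v j k)^K = ∏ _t : Fin K, (∑ k, v i k * v j k) := by
        simp [Finset.prod_const]
      rw [h1, Finset.prod_univ_sum, Fintype.piFinset_univ]
    rw [mul_pow, this, Finset.mul_sum, Finset.mul_sum, Finset.sum_div, Finset.mul_sum]
    refine Finset.sum_congr rfl fun mf _ => ?_
    rw [Finset.prod_mul_distrib]
    ring
  simp only [expand]
  simp only [← Finset.mul_sum]
  refine mul_nonneg (div_nonneg (pow_nonneg (by linarith) _) (by positivity)) ?_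
  have hsq : ∀ mf : Fin K → Fin m, (∑ i, a i * ∏ t, v i (mf t))^2
      = ∑ i, ∑ j, (a i * ∏ t, v i (mf t)) * (a j * ∏ t, v j (mf t)) := by
    intro mf; rw [sq, Finset.sum_mul_sum]
  have sq_id : ∑ i, ∑ j, ∑ mf : Fin K → Fin m, (a i * ∏ t, v i (mf t)) * (a j * ∏ t, v j (mf t))
      = ∑ mf : Fin K → Fin m, (∑ i, a i * ∏ t, v i (mf t))^2 := by
    calc ∑ i, ∑ j, ∑ mf : Fin K → Fin m, (a i * ∏ t, v i (mf t)) * (a j * ∏ t, v j (mf t))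
        = ∑ i, ∑ mf : Fin K → Fin m, ∑ j, (a i * ∏ t, v i (mf t)) * (a j * ∏ t, v j (mf t)) :=
          Finset.sum_congr rfl fun i _ => Finset.sum_comm
      _ = ∑ mf : Fin K → Fin m, ∑ i, ∑ j, (a i * ∏ t, v i (mf t)) * (a j * ∏ t, v j (mf t)) :=
          Finset.sum_comm
      _ = ∑ mf : Fin K → Fin m, (∑ i, a i * ∏ t, v i (mf t))^2 :=
          Finset.sum_congr rfl fun mf _ => (hsq mf).symm
  rw [sq_id]
  exact Finset.sum_nonneg fun mf _ => sq_nonneg _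

lemma aux_cont {β d : ℝ} : ContinuousOn (fun u : ℝ => (1 - Real.exp (-(d*u))) * u^(-1-β)) (Ioi 0) := by
  apply ContinuousOn.mul
  · exact (continuous_const.sub ((continuous_const.mul continuous_id).neg.rexp)).continuousOn
  · exact fun u hu => (Real.continuousAt_rpow_const u _ (Or.inl (ne_of_gt hu))).continuousWithinAt

lemma int_gen {β : ℝ} (hβ0 : 0 < β) (hβ1 : β < 1) {d : ℝ} (hd : 0 ≤ d) :
    IntegrableOn (fun u : ℝ => (1 - Real.exp (-(d*u))) * u^(-1-β)) (Ioi 0) := by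
  have hmeas : ∀ s ⊆ Ioi (0:ℝ), MeasurableSet s →
      AEStronglyMeasurable (fun u : ℝ => (1 - Real.exp (-(d*u))) * u^(-1-β)) (volume.restrict s) :=
    fun s hs hms => ((aux_cont).mono hs).aestronglyMeasurable hms
  have h1 : IntegrableOn (fun u : ℝ => (1 - Real.exp (-(d*u))) * u^(-1-β)) (Ioc 0 1) := by
    have hbound : IntegrableOn (fun u : ℝ => d * u^(-β)) (Ioc 0 1) := by
      refine Integrable.const_mul ?_ d
      exact (intervalIntegrable_iff_integrableOn_Ioc_of_le zero_le_one).mp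
        (intervalIntegral.intervalIntegrable_rpow' (by linarith))
    refine hbound.mono' (hmeas _ Ioc_subset_Ioi_self measurableSet_Ioc) ?_
    filter_upwards [ae_restrict_mem measurableSet_Ioc] with u hu
    have hu0 : 0 < u := hu.1
    have h1e : 0 ≤ 1 - Real.exp (-(d*u)) := by
      have : Real.exp (-(d*u)) ≤ 1 := Real.exp_le_one_iff.mpr (by nlinarith)
      linarith
    rw [Real.norm_eq_abs, abs_of_nonneg (mul_nonneg h1e (rpow_nonneg hu0.le _))]
    have hle : 1 - Real.exp (-(d*u)) ≤ d * u := by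
      have := Real.add_one_le_exp (-(d*u))
      linarith
    calc (1 - Real.exp (-(d*u))) * u^(-1-β) ≤ (d*u) * u^(-1-β) := by
          apply mul_le_mul_of_nonneg_right hle (rpow_nonneg hu0.le _)
      _ = d * u^(-β) := by
          rw [mul_assoc]
          congr 1
          nth_rewrite 1 [← Real.rpow_one u]
          rw [← Real.rpow_add hu0]
          congr 1; ring
  have h2 : IntegrableOn (fun u : ℝ => (1 - Real.exp (-(d*u))) * u^(-1-β)) (Ioi 1) := by
    have hbound : IntegrableOn (fun u : ℝ => u^(-1-β)) (Ioi 1) :=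
      integrableOn_Ioi_rpow_of_lt (by linarith) one_pos
    refine hbound.mono' (hmeas _ (fun u hu => mem_Ioi.mpr (lt_trans one_pos hu)) measurableSet_Ioi) ?_
    filter_upwards [ae_restrict_mem measurableSet_Ioi] with u hu
    have hu0 : (0:ℝ) < u := lt_trans one_pos hu
    have h1e : 0 ≤ 1 - Real.exp (-(d*u)) := by
      have : Real.exp (-(d*u)) ≤ 1 := Real.exp_le_one_iff.mpr (by nlinarith)
      linarith
    rw [Real.norm_eq_abs, abs_of_nonneg (mul_nonneg h1e (rpow_nonneg hu0.le _))]
    have hle : 1 - Real.exp (-(d*u)) ≤ 1 := by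
      have := Real.exp_nonneg (-(d*u)); linarith
    nlinarith [rpow_nonneg hu0.le (-1-β), mul_le_mul_of_nonneg_right hle (rpow_nonneg hu0.le (-1-β))]
  have : Ioc (0:ℝ) 1 ∪ Ioi 1 = Ioi 0 := Ioc_union_Ioi_eq_Ioi zero_le_one
  rw [← this]
  exact h1.union h2

noncomputable def Iconst (β : ℝ) : ℝ := ∫ u in Ioi (0:ℝ), (1 - Real.exp (-u)) * u^(-1-β)

lemma Iconst_pos {β : ℝ} (hβ0 : 0 < β) (hβ1 : β < 1) : 0 < Iconst β := by
  have hint : IntegrableOn (fun u : ℝ => (1 - Real.exp (-u)) * u^(-1-β)) (Ioi 0) := by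
    have := int_gen hβ0 hβ1 zero_le_one
    simpa using this
  rw [Iconst]
  rw [setIntegral_pos_iff_support_of_nonneg_ae ?_ hint]
  · refine lt_of_lt_of_le (b := volume (Ioi (0:ℝ))) ?_ (measure_mono ?_)
    · rw [Real.volume_Ioi]; exact ENNReal.zero_lt_top
    · intro u hu
      refine ⟨?_, hu⟩
      have h1 : Real.exp (-u) < 1 := Real.exp_lt_one_iff.mpr (by simpa using hu)
      have h2 : (0:ℝ) < u^(-1-β) := Real.rpow_pos_of_pos hu _
      exact ne_of_gt (mul_pos (by linarith) h2)
  · filter_upwards [ae_restrict_mem measurableSet_Ioi] with u hu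
    have h1 : Real.exp (-u) ≤ 1 := Real.exp_le_one_iff.mpr (by simpa using le_of_lt hu)
    exact mul_nonneg (by linarith) (Real.rpow_nonneg (le_of_lt hu) _)

lemma eval_gen {β : ℝ} (hβ0 : 0 < β) (hβ1 : β < 1) {d : ℝ} (hd : 0 ≤ d) :
    ∫ u in Ioi (0:ℝ), (1 - Real.exp (-(d*u))) * u^(-1-β) = d^β * Iconst β := by
  rcases eq_or_lt_of_le hd with rfl | hd0
  · simp [Real.zero_rpow (ne_of_gt hβ0)]
  · have hone : d^(1+β) * d^(-1-β) = 1 := by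
      rw [← Real.rpow_add hd0]; norm_num
    have key : EqOn (fun u : ℝ => (1 - Real.exp (-(d*u))) * u^(-1-β))
        (fun u : ℝ => d^(1+β) * ((1 - Real.exp (-(d*u))) * (d*u)^(-1-β))) (Ioi 0) := by
      intro u hu
      simp only
      rw [Real.mul_rpow hd0.le (le_of_lt hu)]
      linear_combination -((1 - Real.exp (-(d*u))) * u^(-1-β)) * hone
    rw [setIntegral_congr_fun measurableSet_Ioi key, integral_const_mul]
    have hsub := integral_comp_mul_left_Ioi (fun t => (1 - Real.exp (-t)) * t^(-1-β)) 0 hd0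
    simp only [mul_zero] at hsub
    rw [hsub, smul_eq_mul, Iconst, ← mul_assoc]
    congr 1
    rw [← Real.rpow_neg_one d, ← Real.rpow_add hd0]
    congr 1; ring

lemma embed {n : ℕ} (hn : 0 < n) (E : Fin n → Fin n → ℝ)
    (hsym : ∀ i j, E i j = E j i) (hdiag : ∀ i, E i i = 0)
    (hAND : ∀ y : Fin n → ℝ, (∑ i, y i) = 0 → ∑ i, ∑ j, y i * E i j * y j ≤ 0) :
    ∃ v : Fin n → Fin n → ℝ, ∀ i j, E i j = ∑ k, (v i k - v j k)^2 := by
  classical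
  set i0 : Fin n := ⟨0, hn⟩ with hi0
  set M : Matrix (Fin n) (Fin n) ℝ := Matrix.of (fun i j => (E i i0 + E j i0 - E i j)/2) with hM
  have hMapp : ∀ i j, M i j = (E i i0 + E j i0 - E i j)/2 := fun i j => rfl
  have hMsym : M.IsHermitian := by
    ext i j
    simp only [Matrix.conjTranspose_apply, star_trivial, hMapp]
    rw [hsym i j]; ring
  have hMpsd : M.PosSemidef := by
    refine Matrix.posSemidef_iff_dotProduct_mulVec.mpr ⟨hMsym, fun c => ?_⟩
    set s : ℝ := ∑ i, c i with hs
    set e : Fin n → ℝ := fun i => if i = i0 then 1 else 0 with he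
    set y : Fin n → ℝ := fun i => c i - s * e i with hy
    have hef : ∀ h : Fin n → ℝ, ∑ i, e i * h i = h i0 := by
      intro h
      rw [Finset.sum_eq_single i0]
      · simp [he]
      · intro b _ hb; simp [he, hb]
      · intro hmem; exact absurd (Finset.mem_univ _) hmem
    have hesum : ∑ i, e i = 1 := by
      have := hef (fun _ => 1); simpa using this
    have hysum : ∑ i, y i = 0 := by
      simp only [hy]
      rw [Finset.sum_sub_distrib, ← Finset.mul_sum, hesum]
      simp [hs]
    set T : ℝ := ∑ i, c i * E i i0 with hT
    have hS2 : ∑ i, ∑ j, e i * (E i j * c j) = T := by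
      have h1 : ∀ i, ∑ j, e i * (E i j * c j) = e i * ∑ j, E i j * c j := by
        intro i; rw [Finset.mul_sum]
      rw [Finset.sum_congr rfl fun i _ => h1 i, hef (fun i => ∑ j, E i j * c j), hT]
      exact Finset.sum_congr rfl fun j _ => by rw [hsym]; ring
    have hS3 : ∑ i, ∑ j, e j * (c i * E i j) = T := by
      rw [hT]
      exact Finset.sum_congr rfl fun i _ => hef (fun j => c i * E i j)
    have hS4 : ∑ i, ∑ j, e i * (e j * E i j) = 0 := by
      have h1 : ∀ i, ∑ j, e i * (e j * E i j) = e i * ∑ j, e j * E i j := by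
        intro i; rw [Finset.mul_sum]
      rw [Finset.sum_congr rfl fun i _ => h1 i]
      have h2 : ∀ i, ∑ j, e j * E i j = E i i0 := fun i => hef (fun j => E i j)
      rw [Finset.sum_congr rfl fun i _ => by rw [h2 i], hef (fun i => E i i0), hdiag]
    have hterm : ∀ i j, y i * E i j * y j
        = c i * E i j * c j - s*(e i * (E i j * c j)) - s*(e j * (c i * E i j))
          + s^2*(e i * (e j * E i j)) := by
      intro i j; simp only [hy]; ring
    have hQ : ∑ i, ∑ j, y i * E i j * y j
        = ∑ i, ∑ j, c i * E i j * c j - 2*s*T := by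
      calc ∑ i, ∑ j, y i * E i j * y j
          = ∑ i, (∑ j, c i * E i j * c j - s*∑ j, e i * (E i j * c j)
              - s*∑ j, e j * (c i * E i j) + s^2*∑ j, e i * (e j * E i j)) := by
            refine Finset.sum_congr rfl fun i _ => ?_
            rw [Finset.sum_congr rfl fun j _ => hterm i j]
            simp only [Finset.sum_add_distrib, Finset.sum_sub_distrib, ← Finset.mul_sum]
        _ = ∑ i, ∑ j, c i * E i j * c j - s*(∑ i, ∑ j, e i * (E i j * c j))
              - s*(∑ i, ∑ j, e j * (c i * E i j)) + s^2*(∑ i, ∑ j, e i * (e j * E i j)) := by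
            simp only [Finset.sum_add_distrib, Finset.sum_sub_distrib, ← Finset.mul_sum]
        _ = ∑ i, ∑ j, c i * E i j * c j - 2*s*T := by
            rw [hS2, hS3, hS4]; ring
    have hA : ∑ i, ∑ j, c i * (c j * E i i0) = s * T := by
      have h1 : ∀ i, ∑ j, c i * (c j * E i i0) = s * (c i * E i i0) := by
        intro i
        rw [hs, Finset.sum_mul]
        exact Finset.sum_congr rfl fun j _ => by ring
      rw [Finset.sum_congr rfl fun i _ => h1 i, ← Finset.mul_sum, hT]
    have hB : ∑ i, ∑ j, c i * (c j * E j i0) = s * T := by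
      rw [Finset.sum_comm]
      have h1 : ∀ j, ∑ i, c i * (c j * E j i0) = s * (c j * E j i0) := by
        intro j
        rw [hs, Finset.sum_mul]
      rw [Finset.sum_congr rfl fun j _ => h1 j, ← Finset.mul_sum, hT]
    have hquad : dotProduct (star c) (M.mulVec c) = s * T - (∑ i, ∑ j, c i * E i j * c j)/2 := by
      have hdot : dotProduct (star c) (M.mulVec c) = ∑ i, ∑ j, c i * (M i j * c j) := by
        simp only [dotProduct, Matrix.mulVec, star_trivial, Pi.star_apply,
          Finset.mul_sum]
      rw [hdot]
      have hterm2 : ∀ i j, c i * (M i j * c j)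
          = (c i * (c j * E i i0))/2 + (c i * (c j * E j i0))/2 - (c i * E i j * c j)/2 := by
        intro i j; rw [hMapp]; ring
      calc ∑ i, ∑ j, c i * (M i j * c j)
          = ∑ i, (∑ j, (c i * (c j * E i i0))/2 + ∑ j, (c i * (c j * E j i0))/2
              - ∑ j, (c i * E i j * c j)/2) := by
            refine Finset.sum_congr rfl fun i _ => ?_
            rw [Finset.sum_congr rfl fun j _ => hterm2 i j,
              Finset.sum_sub_distrib, Finset.sum_add_distrib]
        _ = ∑ i, ∑ j, (c i * (c j * E i i0))/2 + ∑ i, ∑ j, (c i * (c j * E j i0))/2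
              - ∑ i, ∑ j, (c i * E i j * c j)/2 := by
            rw [Finset.sum_sub_distrib, Finset.sum_add_distrib]
        _ = (∑ i, ∑ j, c i * (c j * E i i0))/2 + (∑ i, ∑ j, c i * (c j * E j i0))/2
              - (∑ i, ∑ j, c i * E i j * c j)/2 := by
            simp only [← Finset.sum_div]
        _ = s * T - (∑ i, ∑ j, c i * E i j * c j)/2 := by
            rw [hA, hB]; ring
    have hneg := hAND y hysum
    rw [hquad]
    linarith [hQ ▸ hneg]
  obtain ⟨B, hB⟩ : ∃ B : Matrix (Fin n) (Fin n) ℝ, M = star B * B := by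
    open scoped MatrixOrder in
    exact CStarAlgebra.nonneg_iff_eq_star_mul_self.mp hMpsd.nonneg
  have hMentry : ∀ i j, M i j = ∑ k, B k i * B k j := by
    intro i j
    rw [hB]
    simp [Matrix.mul_apply, Matrix.conjTranspose_apply]
  refine ⟨fun i k => B k i, fun i j => ?_⟩
  have h1 : ∑ k, (B k i - B k j)^2
      = ∑ k, B k i * B k i + ∑ k, B k j * B k j - 2 * ∑ k, B k i * B k j := by
    rw [← Finset.sum_add_distrib, Finset.mul_sum, ← Finset.sum_sub_distrib]
    exact Finset.sum_congr rfl fun k _ => by ring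
  show E i j = ∑ k, (B k i - B k j)^2
  rw [h1, ← hMentry i i, ← hMentry j j, ← hMentry i j]
  simp only [hMapp, hdiag]
  ring

lemma rpow_AND {n : ℕ} (hn : 0 < n) {β : ℝ} (hβ0 : 0 < β) (hβ1 : β < 1)
    (E : Fin n → Fin n → ℝ)
    (hsym : ∀ i j, E i j = E j i) (hdiag : ∀ i, E i i = 0) (hnn : ∀ i j, 0 ≤ E i j)
    (hAND : ∀ y : Fin n → ℝ, (∑ i, y i) = 0 → ∑ i, ∑ j, y i * E i j * y j ≤ 0)
    (y : Fin n → ℝ) (hy : (∑ i, y i) = 0) :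
    ∑ i, ∑ j, y i * E i j ^ β * y j ≤ 0 ∧
      ((∀ i j, i ≠ j → 0 < E i j) → y ≠ 0 → ∑ i, ∑ j, y i * E i j ^ β * y j < 0) := by
  classical
  obtain ⟨v, hv⟩ := embed hn E hsym hdiag hAND
  set f : ℝ → ℝ := fun u => ∑ i, ∑ j, y i * y j * Real.exp (-(E i j * u)) with hf
  have hfnn : ∀ u : ℝ, 0 ≤ u → 0 ≤ f u := by
    intro u hu
    rw [hf]
    calc (0:ℝ) ≤ ∑ i, ∑ j, y i * y j * Real.exp (-(u * ∑ k, (v i k - v j k)^2)) :=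
          gauss_psd v hu y
      _ = ∑ i, ∑ j, y i * y j * Real.exp (-(E i j * u)) := by
          refine Finset.sum_congr rfl fun i _ => Finset.sum_congr rfl fun j _ => ?_
          rw [hv i j, mul_comm u]
  -- the key integral identity
  set S : ℝ := ∑ i, ∑ j, y i * E i j ^ β * y j with hS
  have hIpos := Iconst_pos hβ0 hβ1
  have hintegrable : ∀ i j : Fin n,
      IntegrableOn (fun u : ℝ => y i * y j * ((1 - Real.exp (-(E i j * u))) * u^(-1-β))) (Ioi 0) :=
    fun i j => (int_gen hβ0 hβ1 (hnn i j)).const_mul _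
  have hkey : S * Iconst β = -∫ u in Ioi (0:ℝ), f u * u^(-1-β) := by
    have h1 : S * Iconst β
        = ∑ i, ∑ j, y i * y j * ∫ u in Ioi (0:ℝ), (1 - Real.exp (-(E i j * u))) * u^(-1-β) := by
      rw [hS, Finset.sum_mul]
      refine Finset.sum_congr rfl fun i _ => ?_
      rw [Finset.sum_mul]
      refine Finset.sum_congr rfl fun j _ => ?_
      rw [eval_gen hβ0 hβ1 (hnn i j)]
      ring
    have h2 : ∀ i j : Fin n, y i * y j * ∫ u in Ioi (0:ℝ), (1 - Real.exp (-(E i j * u))) * u^(-1-β)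
        = ∫ u in Ioi (0:ℝ), y i * y j * ((1 - Real.exp (-(E i j * u))) * u^(-1-β)) :=
      fun i j => (integral_const_mul _ _).symm
    rw [h1, Finset.sum_congr rfl fun i _ => Finset.sum_congr rfl fun j _ => h2 i j]
    rw [Finset.sum_congr rfl fun i _ =>
      (integral_finset_sum Finset.univ fun j _ => hintegrable i j).symm]
    rw [← integral_finset_sum Finset.univ fun i _ => integrable_finset_sum _ fun j _ => hintegrable i j]
    rw [← integral_neg]
    refine setIntegral_congr_fun measurableSet_Ioi fun u hu => ?_
    have expand : ∑ i, ∑ j, y i * y j * ((1 - Real.exp (-(E i j * u))) * u^(-1-β))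
        = (∑ i, ∑ j, y i * y j) * u^(-1-β) - f u * u^(-1-β) := by
      rw [hf]
      simp only [Finset.sum_mul]
      rw [← Finset.sum_sub_distrib]
      refine Finset.sum_congr rfl fun i _ => ?_
      rw [← Finset.sum_sub_distrib]
      refine Finset.sum_congr rfl fun j _ => ?_
      ring
    have hyy : ∑ i, ∑ j, y i * y j = 0 := by
      have : ∑ i, ∑ j, y i * y j = (∑ i, y i) * (∑ j, y j) := by
        rw [Finset.sum_mul_sum]
      rw [this, hy, zero_mul]
    rw [expand, hyy, zero_mul, zero_sub]
  have hintf : IntegrableOn (fun u : ℝ => f u * u^(-1-β)) (Ioi 0) := by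
    have : IntegrableOn (fun u : ℝ =>
        (0:ℝ) - ∑ i, ∑ j, y i * y j * ((1 - Real.exp (-(E i j * u))) * u^(-1-β))) (Ioi 0) := by
      refine Integrable.sub (integrable_zero _ _ _) ?_
      exact integrable_finset_sum _ fun i _ => integrable_finset_sum _ fun j _ => hintegrable i j
    refine this.congr_fun (fun u hu => ?_) measurableSet_Ioi
    have expand : ∑ i, ∑ j, y i * y j * ((1 - Real.exp (-(E i j * u))) * u^(-1-β))
        = (∑ i, ∑ j, y i * y j) * u^(-1-β) - f u * u^(-1-β) := by
      rw [hf]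
      simp only [Finset.sum_mul]
      rw [← Finset.sum_sub_distrib]
      refine Finset.sum_congr rfl fun i _ => ?_
      rw [← Finset.sum_sub_distrib]
      refine Finset.sum_congr rfl fun j _ => ?_
      ring
    have hyy : ∑ i, ∑ j, y i * y j = 0 := by
      have : ∑ i, ∑ j, y i * y j = (∑ i, y i) * (∑ j, y j) := by
        rw [Finset.sum_mul_sum]
      rw [this, hy, zero_mul]
    beta_reduce
    rw [expand, hyy, zero_mul, zero_sub]
    ring
  have hint_nonneg : 0 ≤ ∫ u in Ioi (0:ℝ), f u * u^(-1-β) := by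
    refine setIntegral_nonneg measurableSet_Ioi fun u hu => ?_
    exact mul_nonneg (hfnn u (le_of_lt hu)) (Real.rpow_nonneg (le_of_lt hu) _)
  constructor
  · nlinarith
  · intro hpos hy0
    -- f tends to ∑ y i ^ 2 > 0 at infinity
    obtain ⟨i0, hi0⟩ : ∃ i, y i ≠ 0 := by
      by_contra h
      push_neg at h
      exact hy0 (funext fun i => h i)
    have hL : 0 < ∑ i, y i * y i := by
      refine Finset.sum_pos' (fun i _ => mul_self_nonneg _) ⟨i0, Finset.mem_univ _, ?_⟩
      exact mul_self_pos.mpr hi0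
    have hlim : Tendsto f atTop (nhds (∑ i, ∑ j, if i = j then y i * y j else 0)) := by
      rw [hf]
      refine tendsto_finset_sum _ fun i _ => tendsto_finset_sum _ fun j _ => ?_
      by_cases hij : i = j
      · subst hij
        simp only [if_pos rfl, hdiag, zero_mul, neg_zero, Real.exp_zero, mul_one]
        exact tendsto_const_nhds
      · simp only [if_neg hij]
        have h0 : Tendsto (fun u : ℝ => Real.exp (-(E i j * u))) atTop (nhds 0) := by
          have h1 : Tendsto (fun u : ℝ => E i j * u) atTop atTop :=
            Tendsto.const_mul_atTop (hpos i j hij) tendsto_id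
          have h2 : Tendsto (fun u : ℝ => -(E i j * u)) atTop atBot :=
            tendsto_neg_atTop_atBot.comp h1
          exact Real.tendsto_exp_atBot.comp h2
        have := h0.const_mul (y i * y j)
        simpa using this
    have hdiagsum : ∑ i, ∑ j, (if i = j then y i * y j else 0) = ∑ i, y i * y i := by
      refine Finset.sum_congr rfl fun i _ => ?_
      rw [Finset.sum_ite_eq Finset.univ i (fun j => y i * y j)]
      simp
    rw [hdiagsum] at hlim
    have hev : ∀ᶠ u in atTop, (∑ i, y i * y i)/2 < f u :=
      hlim.eventually (eventually_gt_nhds (by linarith))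
    obtain ⟨u0, hfu0, hu01⟩ := (hev.and (eventually_ge_atTop (1:ℝ))).exists
    have hu0pos : (0:ℝ) < u0 := lt_of_lt_of_le one_pos hu01
    -- integral is strictly positive
    have hcontf : Continuous f := by
      rw [hf]
      refine continuous_finset_sum _ fun i _ => continuous_finset_sum _ fun j _ => ?_
      exact continuous_const.mul ((continuous_const.mul continuous_id).neg.rexp)
    have hg0 : 0 < f u0 * u0^(-1-β) :=
      mul_pos (by linarith) (Real.rpow_pos_of_pos hu0pos _)
    have hgcont : ContinuousAt (fun u : ℝ => f u * u^(-1-β)) u0 :=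
      hcontf.continuousAt.mul (Real.continuousAt_rpow_const _ _ (Or.inl (ne_of_gt hu0pos)))
    have hevnhds : ∀ᶠ u in nhds u0, 0 < f u * u^(-1-β) :=
      hgcont.eventually (eventually_gt_nhds hg0)
    obtain ⟨U, hUsub, hUopen, hu0U⟩ := eventually_nhds_iff.mp hevnhds
    have hintpos : 0 < ∫ u in Ioi (0:ℝ), f u * u^(-1-β) := by
      rw [setIntegral_pos_iff_support_of_nonneg_ae ?_ hintf]
      · refine lt_of_lt_of_le (b := volume (U ∩ Ioi 0)) ?_ (measure_mono ?_)
        · exact (hUopen.inter isOpen_Ioi).measure_pos volume ⟨u0, hu0U, hu0pos⟩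
        · rintro u ⟨huU, hu0'⟩
          exact ⟨ne_of_gt (hUsub u huU), hu0'⟩
      · filter_upwards [ae_restrict_mem measurableSet_Ioi] with u hu
        exact mul_nonneg (hfnn u (le_of_lt hu)) (Real.rpow_nonneg (le_of_lt hu) _)
    nlinarith

lemma det_sign {n : ℕ} (hn : 2 ≤ n) (B : Matrix (Fin n) (Fin n) ℝ)
    (hsym : B.IsSymm)
    (hstrict : ∀ y : Fin n → ℝ, (∑ i, y i) = 0 → y ≠ 0 →
      ∑ i, ∑ j, y i * B i j * y j < 0)
    (hones : 0 < ∑ i, ∑ j, B i j) :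
    0 < (-1 : ℝ)^(n-1) * B.det := by
  classical
  have hherm : B.IsHermitian := by
    ext i j
    simp only [Matrix.conjTranspose_apply, star_trivial]
    exact hsym.apply i j
  set lam : Fin n → ℝ := hherm.eigenvalues with hlam
  set Umat : Matrix (Fin n) (Fin n) ℝ := (hherm.eigenvectorUnitary : Matrix (Fin n) (Fin n) ℝ)
    with hU
  have hspec : B = Umat * Matrix.diagonal lam * star Umat := by
    have := hherm.spectral_theorem
    simpa using this
  have hUU : star Umat * Umat = 1 := (Unitary.mem_iff.mp hherm.eigenvectorUnitary.2).1
  have hrecover : ∀ w : Fin n → ℝ, (star Umat) *ᵥ (Umat *ᵥ w) = w := by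
    intro w
    rw [Matrix.mulVec_mulVec, hUU, Matrix.one_mulVec]
  have hvm : ∀ y : Fin n → ℝ, y ᵥ* Umat = star Umat *ᵥ y := by
    intro y
    rw [Matrix.star_eq_conjTranspose, Matrix.mulVec_conjTranspose]
    simp
  have hq : ∀ y : Fin n → ℝ, ∑ i, ∑ j, y i * B i j * y j
      = ∑ i, lam i * ((star Umat *ᵥ y) i)^2 := by
    intro y
    have h1 : ∑ i, ∑ j, y i * B i j * y j = dotProduct y (B *ᵥ y) := by
      simp only [dotProduct, Matrix.mulVec, Finset.mul_sum]
      exact Finset.sum_congr rfl fun i _ => Finset.sum_congr rfl fun j _ => by ring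
    rw [h1, hspec, ← Matrix.mulVec_mulVec, ← Matrix.mulVec_mulVec,
      Matrix.dotProduct_mulVec, hvm]
    simp only [dotProduct, Matrix.mulVec_diagonal]
    exact Finset.sum_congr rfl fun i _ => by ring
  set L : Fin n → ℝ := fun k => ∑ r, Umat r k with hL
  have hsum_mulvec : ∀ w : Fin n → ℝ, ∑ r, (Umat *ᵥ w) r = ∑ k, w k * L k := by
    intro w
    simp only [Matrix.mulVec, dotProduct]
    rw [Finset.sum_comm]
    refine Finset.sum_congr rfl fun k _ => ?_
    rw [← Finset.sum_mul]
    exact mul_comm _ _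
  -- main claim: no two indices both have nonnegative eigenvalues
  have claim_a : ∀ i j : Fin n, i ≠ j → ¬(0 ≤ lam i ∧ 0 ≤ lam j) := by
    rintro i j hij ⟨hi, hj⟩
    obtain ⟨a, b, hab, habL⟩ : ∃ a b : ℝ, ¬(a = 0 ∧ b = 0) ∧ a * L i + b * L j = 0 := by
      rcases eq_or_ne (L i) 0 with hLi | hLi
      · exact ⟨1, 0, by simp, by simp [hLi]⟩
      · exact ⟨L j, -L i, fun h => hLi (by simpa using h.2), by ring⟩
    set w : Fin n → ℝ := fun k => a * (if k = i then 1 else 0) + b * (if k = j then 1 else 0)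
      with hw
    set y : Fin n → ℝ := Umat *ᵥ w with hy
    have hwsum : ∑ k, w k * L k = a * L i + b * L j := by
      rw [hw]
      have : ∀ k : Fin n, (a * (if k = i then 1 else 0) + b * (if k = j then 1 else 0)) * L k
          = a * (if k = i then L i else 0) + b * (if k = j then L j else 0) := by
        intro k
        rcases eq_or_ne k i with rfl | h1
        · simp [hij]
        · rcases eq_or_ne k j with rfl | h2
          · simp [h1]
          · simp [h1, h2]
      rw [Finset.sum_congr rfl fun k _ => this k, Finset.sum_add_distrib,
        ← Finset.mul_sum, ← Finset.mul_sum, Finset.sum_ite_eq', Finset.sum_ite_eq']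
      simp
    have hysum : ∑ r, y r = 0 := by rw [hy, hsum_mulvec, hwsum, habL]
    have hwne : w ≠ 0 := by
      intro h
      apply hab
      constructor
      · have := congrFun h i
        simpa [hw, hij, Ne.symm hij] using this
      · have := congrFun h j
        simpa [hw, hij, Ne.symm hij] using this
    have hyne : y ≠ 0 := by
      intro h
      apply hwne
      have := hrecover w
      rw [← hy, h, Matrix.mulVec_zero] at this
      exact this.symm
    have hqy := hstrict y hysum hyne
    rw [hq y, hy, hrecover w] at hqy
    have : 0 ≤ ∑ k, lam k * (w k)^2 := by
      refine Finset.sum_nonneg fun k _ => ?_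
      by_cases h1 : k = i
      · subst h1; refine mul_nonneg hi (sq_nonneg _)
      · by_cases h2 : k = j
        · subst h2; refine mul_nonneg hj (sq_nonneg _)
        · simp [hw, h1, h2]
    linarith
  -- there is a positive eigenvalue
  have claim_b : ∃ i, 0 < lam i := by
    by_contra h
    push_neg at h
    have h1 : ∑ i, ∑ j, (1:ℝ) * B i j * 1 = ∑ i, ∑ j, B i j := by
      exact Finset.sum_congr rfl fun i _ => Finset.sum_congr rfl fun j _ => by ring
    have h2 := hq (fun _ => (1:ℝ))
    have h3 : ∑ i, lam i * ((star Umat *ᵥ fun _ => (1:ℝ)) i)^2 ≤ 0 :=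
      Finset.sum_nonpos fun i _ => mul_nonpos_of_nonpos_of_nonneg (h i) (sq_nonneg _)
    rw [h2] at h1
    linarith [h1 ▸ h3]
  obtain ⟨i0, hi0⟩ := claim_b
  have hneg : ∀ j, j ≠ i0 → lam j < 0 := by
    intro j hj
    by_contra h
    push_neg at h
    exact claim_a j i0 hj ⟨h, le_of_lt hi0⟩
  have hdet : B.det = ∏ i, lam i := by
    have := hherm.det_eq_prod_eigenvalues
    simpa using this
  have hcard : (Finset.univ.erase i0).card = n - 1 := by
    rw [Finset.card_erase_of_mem (Finset.mem_univ _), Finset.card_univ, Fintype.card_fin]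
  have hsplit : ∏ i, lam i = lam i0 * ∏ i ∈ Finset.univ.erase i0, lam i :=
    (Finset.mul_prod_erase Finset.univ lam (Finset.mem_univ i0)).symm
  have hprodneg : ∏ i ∈ Finset.univ.erase i0, (-lam i)
      = (-1:ℝ)^(n-1) * ∏ i ∈ Finset.univ.erase i0, lam i := by
    have : ∀ i ∈ Finset.univ.erase i0, -lam i = (-1) * lam i := fun i _ => by ring
    rw [Finset.prod_congr rfl this, Finset.prod_mul_distrib, Finset.prod_const, hcard]
  have hpos : 0 < lam i0 * ∏ i ∈ Finset.univ.erase i0, (-lam i) := by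
    refine mul_pos hi0 (Finset.prod_pos fun i hi => ?_)
    have := hneg i (Finset.ne_of_mem_erase hi)
    linarith
  rw [hprodneg] at hpos
  rw [hdet, hsplit]
  nlinarith [hpos]


lemma sq_AND {n : ℕ} (s : Fin n → ℝ) (y : Fin n → ℝ) (hy : ∑ i, y i = 0) :
    ∑ i, ∑ j, y i * (s i - s j)^2 * y j ≤ 0 := by
  have hinner : ∀ i : Fin n, ∑ j, y i * (s i - s j)^2 * y j
      = y i * s i^2 * (∑ j, y j) + y i * (∑ j, y j * s j^2)
        + (-2 * (y i * s i)) * (∑ j, y j * s j) := by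
    intro i
    calc ∑ j, y i * (s i - s j)^2 * y j
        = ∑ j, (y i * s i^2 * y j + y i * (y j * s j^2) + (-2*(y i * s i)) * (y j * s j)) :=
          Finset.sum_congr rfl fun j _ => by ring
      _ = _ := by
          simp only [Finset.sum_add_distrib, ← Finset.mul_sum]
  calc ∑ i, ∑ j, y i * (s i - s j)^2 * y j
      = ∑ i, (y i * s i^2 * (∑ j, y j) + y i * (∑ j, y j * s j^2)
          + (-2 * (y i * s i)) * (∑ j, y j * s j)) := Finset.sum_congr rfl fun i _ => hinner i
    _ = ∑ i, (y i * (∑ j, y j * s j^2) + (-2 * (y i * s i)) * (∑ j, y j * s j)) := by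
        refine Finset.sum_congr rfl fun i _ => ?_
        rw [hy, mul_zero, zero_add]
    _ = (∑ i, y i) * (∑ j, y j * s j^2)
          + (-2) * ((∑ i, y i * s i) * (∑ j, y j * s j)) := by
        rw [Finset.sum_add_distrib, ← Finset.sum_mul]
        congr 1
        rw [← Finset.sum_mul]
        have : ∑ i, -2 * (y i * s i) = -2 * ∑ i, y i * s i := by
          rw [Finset.mul_sum]
        rw [this, mul_assoc]
    _ ≤ 0 := by
        rw [hy, zero_mul, zero_add]
        nlinarith [mul_self_nonneg (∑ i, y i * s i)]


theorem stmt4 {d n : ℕ} (hd : 0 < d) (hn : 0 < n)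
    (p : ℝ) (hp1 : 1 < p) (hp2 : p < 2)
    (x : Fin n → (Fin d → ℝ)) :
    IsAND (Matrix.of fun i j => pNorm p (x i - x j)) ∧
      (2 ≤ n → Function.Injective x →
        IsStrictAND (Matrix.of fun i j => pNorm p (x i - x j)) ∧
          0 < (-1 : ℝ) ^ (n - 1) *
              (Matrix.of fun i j => pNorm p (x i - x j)).det) := by
  classical
  set A : Matrix (Fin n) (Fin n) ℝ := Matrix.of fun i j => pNorm p (x i - x j) with hA
  set D : Fin n → Fin n → ℝ := fun i j => ∑ k, |x i k - x j k|^p with hD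
  have hp0 : (0:ℝ) < p := by linarith
  have hAD : ∀ i j, A i j = D i j ^ (1/p) := by
    intro i j
    simp only [hA, Matrix.of_apply, pNorm, hD, Pi.sub_apply]
  have habs : ∀ t : ℝ, ((t^2 : ℝ))^(p/2) = |t|^p := by
    intro t
    rw [← sq_abs t, ← Real.rpow_natCast |t| 2, ← Real.rpow_mul (abs_nonneg t)]
    norm_num
    congr 1
    ring
  have hcoord : ∀ (k : Fin d) (y : Fin n → ℝ), (∑ i, y i) = 0 →
      ∑ i, ∑ j, y i * |x i k - x j k|^p * y j ≤ 0 := by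
    intro k y hy
    have h := (rpow_AND hn (by linarith : (0:ℝ) < p/2) (by linarith : p/2 < 1)
      (fun i j => (x i k - x j k)^2)
      (fun i j => by ring)
      (fun i => by simp)
      (fun i j => sq_nonneg _)
      (fun z hz => sq_AND (fun i => x i k) z hz)
      y hy).1
    calc ∑ i, ∑ j, y i * |x i k - x j k|^p * y j
        = ∑ i, ∑ j, y i * ((x i k - x j k)^2)^(p/2) * y j :=
          Finset.sum_congr rfl fun i _ => Finset.sum_congr rfl fun j _ => by rw [habs]
      _ ≤ 0 := h
  have hDsym : ∀ i j, D i j = D j i := by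
    intro i j; simp only [hD]
    exact Finset.sum_congr rfl fun k _ => by rw [abs_sub_comm]
  have hDdiag : ∀ i, D i i = 0 := by
    intro i; simp only [hD]
    refine Finset.sum_eq_zero fun k _ => ?_
    simp [Real.zero_rpow (ne_of_gt hp0)]
  have hDnn : ∀ i j, 0 ≤ D i j := by
    intro i j
    exact Finset.sum_nonneg fun k _ => Real.rpow_nonneg (abs_nonneg _) _
  have hD_AND : ∀ y : Fin n → ℝ, (∑ i, y i) = 0 → ∑ i, ∑ j, y i * D i j * y j ≤ 0 := by
    intro y hy
    have h1 : ∀ i j, y i * D i j * y j = ∑ k, y i * |x i k - x j k|^p * y j := by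
      intro i j
      simp only [hD]
      rw [Finset.mul_sum, Finset.sum_mul]
    have hswap : ∑ i, ∑ j, y i * D i j * y j
        = ∑ k, ∑ i, ∑ j, y i * |x i k - x j k|^p * y j := by
      calc ∑ i, ∑ j, y i * D i j * y j
          = ∑ i, ∑ j, ∑ k, y i * |x i k - x j k|^p * y j :=
            Finset.sum_congr rfl fun i _ => Finset.sum_congr rfl fun j _ => h1 i j
        _ = ∑ i, ∑ k, ∑ j, y i * |x i k - x j k|^p * y j :=
            Finset.sum_congr rfl fun i _ => Finset.sum_comm
        _ = ∑ k, ∑ i, ∑ j, y i * |x i k - x j k|^p * y j := Finset.sum_comm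
    rw [hswap]
    exact Finset.sum_nonpos fun k _ => hcoord k y hy
  have hβ0 : (0:ℝ) < 1/p := by positivity
  have hβ1 : 1/p < 1 := by rw [div_lt_one hp0]; linarith
  have hmain := fun (y : Fin n → ℝ) (hy : (∑ i, y i) = 0) =>
    rpow_AND hn hβ0 hβ1 D hDsym hDdiag hDnn hD_AND y hy
  have hAsymm : A.IsSymm := by
    ext i j
    rw [Matrix.transpose_apply, hAD i j, hAD j i, hDsym j i]
  have hAq : ∀ y : Fin n → ℝ, ∑ i, ∑ j, y i * A i j * y j
      = ∑ i, ∑ j, y i * D i j ^ (1/p) * y j :=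
    fun y => Finset.sum_congr rfl fun i _ => Finset.sum_congr rfl fun j _ => by rw [hAD]
  refine ⟨⟨hAsymm, fun y hy => ?_⟩, fun hn2 hinj => ?_⟩
  · rw [hAq]; exact (hmain y hy).1
  · have hDpos : ∀ i j, i ≠ j → 0 < D i j := by
      intro i j hij
      have hxne : x i ≠ x j := fun h => hij (hinj h)
      obtain ⟨k, hk⟩ := Function.ne_iff.mp hxne
      refine Finset.sum_pos' (fun k' _ => Real.rpow_nonneg (abs_nonneg _) _)
        ⟨k, Finset.mem_univ _, ?_⟩
      exact Real.rpow_pos_of_pos (abs_pos.mpr (sub_ne_zero_of_ne hk)) _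
    have hstrictA : IsStrictAND A := ⟨hAsymm, fun y hy hy0 => by
      rw [hAq]; exact (hmain y hy).2 hDpos hy0⟩
    refine ⟨hstrictA, ?_⟩
    have hi0j0 : (⟨0, by omega⟩ : Fin n) ≠ (⟨1, by omega⟩ : Fin n) := by
      intro h
      have := congrArg Fin.val h
      simpa using this
    have hones : 0 < ∑ i, ∑ j, A i j := by
      refine Finset.sum_pos' (fun i _ => Finset.sum_nonneg fun j _ => ?_)
        ⟨⟨0, by omega⟩, Finset.mem_univ _, ?_⟩
      · rw [hAD]; exact Real.rpow_nonneg (hDnn i j) _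
      · refine Finset.sum_pos'
          (fun j _ => by rw [hAD]; exact Real.rpow_nonneg (hDnn _ j) _)
          ⟨⟨1, by omega⟩, Finset.mem_univ _, ?_⟩
        rw [hAD]
        exact Real.rpow_pos_of_pos (hDpos _ _ hi0j0) _
    exact det_sign hn2 A hAsymm (fun y hy hy0 => hstrictA.2 y hy hy0) hones
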